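/- Let A ∈ M_n(ℝ). Then A is an inverse M-matrix whose inverse has the bdsw structure if and only if A > 0 (entrywise), A has the inverse cyclic property, and d - c > 0 where d is the product of the diagonal entries and c the cyclic product. -/

import Mathlib

open Matrix Finset

/-- A matrix (of order ≥ 2) has the *inverse cyclic property* if all its diagonal
entries are nonzero and the three cyclic entry conditions hold. -/
def InvCyclic {n : ℕ} (A : Matrix (Fin (n + 2)) (Fin (n + 2)) ℝ) : Prop :=
  (∀ i, A i i ≠ 0) ∧
  (∀ i k j : Fin (n + 2), i < k → k < j → A i j = A i k * A k j / A k k) ∧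
  (∀ i j : Fin (n + 2), j < i → i ≠ Fin.last (n + 1) →
    A i j = A i (Fin.last (n + 1)) * A (Fin.last (n + 1)) j /
      A (Fin.last (n + 1)) (Fin.last (n + 1))) ∧
  (∀ j : Fin (n + 2), j < Fin.last (n + 1) →
    A (Fin.last (n + 1)) j = A (Fin.last (n + 1)) 0 * A 0 j / A 0 0)

/-- `d`, the product of the diagonal entries. -/
def diagProd {n : ℕ} (A : Matrix (Fin (n + 2)) (Fin (n + 2)) ℝ) : ℝ := ∏ i, A i i

/-- `c`, the cyclic product `a₁₂a₂₃⋯a_{(n-1)n}a_{n1}`. -/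
def cycProd {n : ℕ} (A : Matrix (Fin (n + 2)) (Fin (n + 2)) ℝ) : ℝ :=
  ∏ i : Fin (n + 2), A i (i + 1)
/-- A *bi-diagonal south-west* (bdsw) matrix: the diagonal, the super diagonal and the
south-west corner entry are nonzero, and all other entries are zero. -/
def Bdsw {n : ℕ} (B : Matrix (Fin (n + 2)) (Fin (n + 2)) ℝ) : Prop :=
  (∀ i, B i i ≠ 0) ∧
  (∀ i j : Fin (n + 2), (j : ℕ) = (i : ℕ) + 1 → B i j ≠ 0) ∧
  (B (Fin.last (n + 1)) 0 ≠ 0) ∧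
  (∀ i j : Fin (n + 2), i ≠ j → (j : ℕ) ≠ (i : ℕ) + 1 →
    ¬(i = Fin.last (n + 1) ∧ j = 0) → B i j = 0)


open scoped Fin.NatCast Fin.IntCast Fin.CommRing

variable {n : ℕ}

lemma fin_one_ne_zero' : (1 : Fin (n+2)) ≠ (0 : Fin (n+2)) := one_ne_zero

lemma fin_add_one_ne (i : Fin (n+2)) : i + 1 ≠ i := by
  intro h
  have h1 : (1 : Fin (n+2)) = 0 := by
    calc (1 : Fin (n+2)) = i + 1 - i := by ring
      _ = i - i := by rw [h]
      _ = 0 := sub_self i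
  exact fin_one_ne_zero' h1

lemma fin_val_add_lt (i : Fin (n+2)) (m : ℕ) (h : i.val + m < n + 2) :
    ((i + (m : Fin (n+2))).val) = i.val + m := by
  have hm : m < n + 2 := by omega
  simp [Fin.val_add, Fin.val_natCast, Nat.mod_eq_of_lt hm, Nat.mod_eq_of_lt h]

section chain

variable (A : Matrix (Fin (n+2)) (Fin (n+2)) ℝ) (L : Fin (n+2) → ℝ)
variable (hChain : ∀ i j, i ≠ j → A i j = L i * A (i+1) j)

include hChain in
lemma chain_pow (m : ℕ) : ∀ i j : Fin (n+2),
    (∀ l : ℕ, l < m → i + (l : Fin (n+2)) ≠ j) →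
    A i j = (∏ l ∈ Finset.range m, L (i + (l : Fin (n+2)))) * A (i + (m : Fin (n+2))) j := by
  induction m with
  | zero => intro i j _; simp
  | succ m ih =>
    intro i j h
    have h1 : A i j = (∏ l ∈ Finset.range m, L (i + (l : Fin (n+2)))) * A (i + (m : Fin (n+2))) j :=
      ih i j (fun l hl => h l (by omega))
    have h2 : A (i + (m : Fin (n+2))) j = L (i + (m : Fin (n+2))) * A (i + (m : Fin (n+2)) + 1) j :=
      hChain _ _ (h m (by omega))
    rw [h1, h2, Finset.prod_range_succ]
    have h3 : i + ((m : ℕ) + 1 : ℕ) = i + (m : Fin (n+2)) + 1 := by push_cast; ring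
    rw [h3]; ring

lemma cycle_prod_eq (i : Fin (n+2)) :
    (∏ l ∈ Finset.range (n+2), L (i + (l : Fin (n+2)))) = ∏ k, L k := by
  have h1 : (∏ k : Fin (n+2), L (i + k)) = ∏ l ∈ Finset.range (n+2), L (i + (l : Fin (n+2))) := by
    rw [← Fin.prod_univ_eq_prod_range (fun l : ℕ => L (i + (l : Fin (n+2)))) (n+2)]
    apply Fintype.prod_congr
    intro k
    congr 1
    simp [Fin.cast_val_eq_self]
  rw [← h1]
  exact Fintype.prod_equiv (Equiv.addLeft i) _ _ (fun k => rfl)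

include hChain in
lemma full_cycle (i : Fin (n+2)) :
    L i * A (i + 1) i = (∏ k, L k) * A i i := by
  have key := chain_pow A L hChain (n+1) (i+1) i ?_
  · have hz : ((n+2 : ℕ) : Fin (n+2)) = 0 := by simp
    have hback : i + 1 + ((n+1 : ℕ) : Fin (n+2)) = i := by
      rw [show ((n+1:ℕ) : Fin (n+2)) = ((n+2:ℕ) : Fin (n+2)) - 1 by push_cast; ring, hz]
      ring
    rw [hback] at key
    rw [key]
    have hsplit : (∏ k, L k) = (∏ l ∈ Finset.range (n+1), L (i + 1 + (l : Fin (n+2)))) * L i := by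
      rw [← cycle_prod_eq L i, Finset.prod_range_succ']
      congr 1
      · apply Finset.prod_congr rfl; intro l _; congr 1; push_cast; ring
      · simp
    rw [hsplit]; ring
  · intro l hl heq
    have h0 : i + ((l+1:ℕ) : Fin (n+2)) = i := by
      rw [show ((l+1:ℕ):Fin (n+2)) = (l : Fin (n+2)) + 1 by push_cast; ring]
      calc i + ((l : Fin (n+2)) + 1) = i + 1 + (l : Fin (n+2)) := by ring
        _ = i := heq
    have h2 : ((l+1:ℕ) : Fin (n+2)) = 0 := by
      calc ((l+1:ℕ) : Fin (n+2)) = i + ((l+1:ℕ) : Fin (n+2)) - i := by ring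
        _ = i - i := by rw [h0]
        _ = 0 := sub_self i
    have hd := (Fin.natCast_eq_zero).mp h2
    have := Nat.le_of_dvd (by omega) hd
    omega

end chain

section chain2
variable (A : Matrix (Fin (n+2)) (Fin (n+2)) ℝ) (L : Fin (n+2) → ℝ)
variable (hChain : ∀ i j, i ≠ j → A i j = L i * A (i+1) j)

include hChain in
lemma pos_all (hL : ∀ i, 0 < L i) (hDiag : ∀ i, 0 < A i i) : ∀ i j, 0 < A i j := by
  intro i j
  set m : ℕ := ((j - i : Fin (n+2)) : ℕ) with hm
  have hij : i + (m : Fin (n+2)) = j := by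
    rw [hm, Fin.cast_val_eq_self]; ring
  have key := chain_pow A L hChain m i j ?_
  · rw [hij] at key
    rw [key]
    exact mul_pos (Finset.prod_pos (fun l _ => hL _)) (hDiag j)
  · intro l hl heq
    have hlN : l < n + 2 := lt_trans hl (Fin.is_lt _)
    have : ((l : Fin (n+2)) : ℕ) = l := Fin.val_natCast l (n+2) ▸ Nat.mod_eq_of_lt hlN
    have h2 : (l : Fin (n+2)) = j - i := by
      calc (l : Fin (n+2)) = i + (l : Fin (n+2)) - i := by ring
        _ = j - i := by rw [heq]
    have : l = m := by rw [← this, h2]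
    omega

include hChain in
lemma cross_mul (i k j : Fin (n+2)) (m : ℕ) (hkk : A k k ≠ 0)
    (hk : k = i + (m : Fin (n+2)))
    (hj : ∀ l : ℕ, l < m → i + (l : Fin (n+2)) ≠ j)
    (hknot : ∀ l : ℕ, l < m → i + (l : Fin (n+2)) ≠ k) :
    A i j = A i k * A k j / A k k := by
  have h1 := chain_pow A L hChain m i j hj
  have h2 := chain_pow A L hChain m i k hknot
  rw [← hk] at h1 h2
  rw [h1, h2]
  field_simp

include hChain in
lemma cyc_eq_rho_mul_diag : cycProd A = (∏ k, L k) * diagProd A := by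
  unfold cycProd diagProd
  have h1 : ∀ i : Fin (n+2), A i (i+1) = L i * A (i+1) (i+1) := by
    intro i
    exact hChain i (i+1) (fin_add_one_ne i).symm
  rw [Finset.prod_congr rfl (fun i _ => h1 i), Finset.prod_mul_distrib]
  congr 1
  exact Fintype.prod_equiv (Equiv.addRight 1) _ _ (fun k => rfl)

end chain2

lemma fin_succ_eq_of_val (i j : Fin (n+2)) (h : (j:ℕ) = (i:ℕ) + 1) : j = i + 1 := by
  apply Fin.val_injective
  rw [show (1 : Fin (n+2)) = ((1:ℕ) : Fin (n+2)) by norm_num,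
    fin_val_add_lt i 1 (by have := j.is_lt; omega)]
  omega

theorem fwd (A : Matrix (Fin (n + 2)) (Fin (n + 2)) ℝ)
    (hdet : A.det ≠ 0) (hZ : ∀ i j, i ≠ j → A⁻¹ i j ≤ 0) (hA : ∀ i j, 0 ≤ A i j)
    (hB : Bdsw A⁻¹) :
    ((∀ i j, 0 < A i j) ∧ InvCyclic A ∧ 0 < diagProd A - cycProd A) := by
  set B := A⁻¹ with hBdef
  have hu : IsUnit A.det := isUnit_iff_ne_zero.mpr hdet
  have hBA : B * A = 1 := Matrix.nonsing_inv_mul A hu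
  have hAB : A * B = 1 := Matrix.mul_nonsing_inv A hu
  obtain ⟨hBd, hBs, hBc, hB0⟩ := hB
  have hzero : ∀ i k : Fin (n+2), k ≠ i → k ≠ i + 1 → B i k = 0 := by
    intro i k h1 h2
    apply hB0 i k (Ne.symm h1)
    · intro hv
      exact h2 (fin_succ_eq_of_val i k hv)
    · rintro ⟨hi, hk⟩
      apply h2
      rw [hi, hk, Fin.last_add_one]
  have hrow : ∀ i j, (B * A) i j = B i i * A i j + B i (i+1) * A (i+1) j := by
    intro i j
    rw [Matrix.mul_apply]
    have hsub : ∑ k, B i k * A k j = ∑ k ∈ ({i, i+1} : Finset (Fin (n+2))), B i k * A k j := by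
      refine (Finset.sum_subset (Finset.subset_univ _) ?_).symm
      intro k _ hk
      simp only [Finset.mem_insert, Finset.mem_singleton, not_or] at hk
      rw [hzero i k hk.1 hk.2, zero_mul]
    rw [hsub, Finset.sum_pair (Ne.symm (fin_add_one_ne i))]
  have hcol : ∀ i j, (A * B) i j = A i (j-1) * B (j-1) j + A i j * B j j := by
    intro i j
    rw [Matrix.mul_apply]
    have hne : j - 1 ≠ j := by
      intro h
      apply fin_one_ne_zero'
      apply neg_eq_zero.mp
      calc (-1 : Fin (n+2)) = j - 1 - j := by ring
        _ = j - j := by rw [h]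
        _ = 0 := sub_self j
    have hsub : ∑ k, A i k * B k j = ∑ k ∈ ({j-1, j} : Finset (Fin (n+2))), A i k * B k j := by
      refine (Finset.sum_subset (Finset.subset_univ _) ?_).symm
      intro k _ hk
      simp only [Finset.mem_insert, Finset.mem_singleton, not_or] at hk
      rw [hzero k j (Ne.symm hk.2) (fun h => hk.1 (by rw [h]; ring)), mul_zero]
    rw [hsub, Finset.sum_pair hne]
  -- diagonal positivity
  have hdiag : ∀ i, 0 < A i i ∧ 0 < B i i := by
    intro i
    have h1 : (A * B) i i = 1 := by rw [hAB, Matrix.one_apply_eq]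
    rw [hcol i i] at h1
    have hne : i - 1 ≠ i := by
      intro h
      apply fin_one_ne_zero'
      apply neg_eq_zero.mp
      calc (-1 : Fin (n+2)) = i - 1 - i := by ring
        _ = i - i := by rw [h]
        _ = 0 := sub_self i
    have h2 : B (i-1) i ≤ 0 := hZ (i-1) i hne
    have h3 : 0 ≤ A i (i-1) := hA i (i-1)
    have h4 : 1 ≤ A i i * B i i := by nlinarith
    have h5 : 0 < A i i := by
      rcases (hA i i).lt_or_eq with h | h
      · exact h
      · exfalso; rw [← h] at h4; simp at h4; linarith
    refine ⟨h5, ?_⟩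
    nlinarith
  -- superdiagonal negativity
  have hsup : ∀ i : Fin (n+2), B i (i+1) < 0 := by
    intro i
    have hne : i ≠ i + 1 := Ne.symm (fin_add_one_ne i)
    refine lt_of_le_of_ne (hZ i (i+1) hne) ?_
    by_cases hi : (i : ℕ) + 1 < n + 2
    · apply hBs
      rw [show (1 : Fin (n+2)) = ((1:ℕ) : Fin (n+2)) by norm_num, fin_val_add_lt i 1 hi]
    · have hil : i = Fin.last (n+1) := by
        apply Fin.val_injective
        have := i.is_lt
        simp only [Fin.val_last]
        omega
      rw [hil, Fin.last_add_one]
      exact hBc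
  set L : Fin (n+2) → ℝ := fun i => -(B i (i+1)) / B i i with hLdef
  have hL : ∀ i, 0 < L i := fun i => div_pos (neg_pos.mpr (hsup i)) (hdiag i).2
  have hChain : ∀ i j : Fin (n+2), i ≠ j → A i j = L i * A (i+1) j := by
    intro i j hij
    have h0 : (B * A) i j = 0 := by rw [hBA]; exact Matrix.one_apply_ne hij
    rw [hrow i j] at h0
    have hBine := ne_of_gt (hdiag i).2
    rw [hLdef]
    field_simp
    linarith
  have hpos : ∀ i j, 0 < A i j := pos_all A L hChain hL (fun i => (hdiag i).1)
  -- InvCyclic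
  have hIC : InvCyclic A := by
    refine ⟨fun i => ne_of_gt (hpos i i), ?_, ?_, ?_⟩
    · intro i k j hik hkj
      refine cross_mul A L hChain i k j ((k:ℕ) - (i:ℕ)) (ne_of_gt (hpos k k)) ?_ ?_ ?_
      · apply Fin.val_injective
        rw [fin_val_add_lt i _ (by have := k.is_lt; omega)]
        rw [Fin.lt_def] at hik
        omega
      · intro l hl heq
        have := congrArg Fin.val heq
        rw [fin_val_add_lt i l (by have := k.is_lt; omega)] at this
        rw [Fin.lt_def] at hik hkj
        omega
      · intro l hl heq
        have := congrArg Fin.val heq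
        rw [fin_val_add_lt i l (by have := k.is_lt; omega)] at this
        rw [Fin.lt_def] at hik
        omega
    · intro i j hji hil
      have hiv : (i : ℕ) < n + 1 := by
        have h1 := i.is_lt
        have h2 : (i:ℕ) ≠ n + 1 := fun h => hil (Fin.val_injective (by simp [h]))
        omega
      refine cross_mul A L hChain i (Fin.last (n+1)) j ((n+1) - (i:ℕ))
        (ne_of_gt (hpos _ _)) ?_ ?_ ?_
      · apply Fin.val_injective
        rw [fin_val_add_lt i _ (by omega)]
        simp only [Fin.val_last]
        omega
      · intro l hl heq
        have := congrArg Fin.val heq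
        rw [fin_val_add_lt i l (by omega)] at this
        rw [Fin.lt_def] at hji
        omega
      · intro l hl heq
        have := congrArg Fin.val heq
        rw [fin_val_add_lt i l (by omega)] at this
        simp only [Fin.val_last] at this
        omega
    · intro j hj
      refine cross_mul A L hChain (Fin.last (n+1)) 0 j 1 (ne_of_gt (hpos _ _)) ?_ ?_ ?_
      · rw [show ((1:ℕ) : Fin (n+2)) = (1 : Fin (n+2)) by norm_num, Fin.last_add_one]
      · intro l hl heq
        interval_cases l
        simp only [Nat.cast_zero, add_zero] at heq
        rw [Fin.lt_def] at hj
        omega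
      · intro l hl heq
        interval_cases l
        simp only [Nat.cast_zero, add_zero] at heq
        have := congrArg Fin.val heq
        simp at this
  -- d - c > 0
  have hd : 0 < diagProd A := Finset.prod_pos (fun i _ => (hpos i i))
  set rho : ℝ := ∏ k, L k with hrho
  have hc : cycProd A = rho * diagProd A := cyc_eq_rho_mul_diag A L hChain
  have hrholt : rho < 1 := by
    have h1 : (B * A) 0 0 = 1 := by rw [hBA, Matrix.one_apply_eq]
    rw [hrow 0 0] at h1
    have h2 : L 0 * A (0+1) 0 = rho * A 0 0 := full_cycle A L hChain 0
    have hB00 : 0 < B 0 0 := (hdiag 0).2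
    have hA00 : 0 < A 0 0 := (hdiag 0).1
    have hB01 : B 0 (0+1) = -(L 0) * B 0 0 := by
      rw [hLdef]; field_simp
    rw [hB01] at h1
    -- h1 : B00 * A00 + (-(L0) * B00) * A 1 0 = 1
    have h3 : B 0 0 * A 0 0 * (1 - rho) = 1 := by nlinarith [h1, h2]
    nlinarith [mul_pos hB00 hA00]
  rw [hc]
  refine ⟨hpos, hIC, ?_⟩
  nlinarith

lemma fin_lt_last_of_ne (j : Fin (n+2)) (h : j ≠ Fin.last (n+1)) : j < Fin.last (n+1) := by
  rw [Fin.lt_def]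
  simp only [Fin.val_last]
  have h1 := j.is_lt
  have h2 : (j:ℕ) ≠ n + 1 := fun hv => h (Fin.val_injective (by simp [hv]))
  omega

theorem bwd (A : Matrix (Fin (n + 2)) (Fin (n + 2)) ℝ)
    (hpos : ∀ i j, 0 < A i j) (hIC : InvCyclic A) (hdc : 0 < diagProd A - cycProd A) :
    A.det ≠ 0 ∧ (∀ i j, i ≠ j → A⁻¹ i j ≤ 0) ∧ (∀ i j, 0 ≤ A i j) ∧ Bdsw A⁻¹ := by
  obtain ⟨hd0, hc2, hc3, hc4⟩ := hIC
  set L : Fin (n+2) → ℝ := fun i => A i (i+1) / A (i+1) (i+1) with hLdef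
  have hL : ∀ i, 0 < L i := fun i => div_pos (hpos _ _) (hpos _ _)
  have hChain : ∀ i j : Fin (n+2), i ≠ j → A i j = L i * A (i+1) j := by
    intro i j hij
    by_cases hil : i = Fin.last (n+1)
    · subst hil
      have hjl : j < Fin.last (n+1) := fin_lt_last_of_ne j (Ne.symm hij)
      rw [hc4 j hjl, hLdef]
      simp only [Fin.last_add_one]
      field_simp
    · have hi1 : (i:ℕ) + 1 < n + 2 := by
        have h1 := i.is_lt
        have h2 : (i:ℕ) ≠ n + 1 := fun hv => hil (Fin.val_injective (by simp [hv]))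
        omega
      have hval : ((i+1 : Fin (n+2)) : ℕ) = (i:ℕ) + 1 := by
        rw [show (1 : Fin (n+2)) = ((1:ℕ) : Fin (n+2)) by norm_num, fin_val_add_lt i 1 hi1]
      have hlt : i < i + 1 := by rw [Fin.lt_def, hval]; omega
      by_cases hj1 : j = i + 1
      · subst hj1
        rw [hLdef]
        exact (div_mul_cancel₀ _ (hd0 _)).symm
      by_cases hlt2 : i + 1 < j
      · rw [hc2 i (i+1) j hlt hlt2, hLdef]
        field_simp
      · have hji : j < i := by
          rw [Fin.lt_def]
          rw [Fin.lt_def, hval] at hlt2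
          have hji' : (j:ℕ) ≠ (i:ℕ) := fun hv => hij (Fin.val_injective hv.symm)
          have hji'' : (j:ℕ) ≠ (i:ℕ)+1 := fun hv => hj1 (Fin.val_injective (by rw [hval]; exact hv))
          omega
        by_cases hi1l : i + 1 = Fin.last (n+1)
        · rw [hc3 i j hji hil, hLdef]
          simp only [hi1l]
          field_simp
        · have hi1lt : i + 1 < Fin.last (n+1) := fin_lt_last_of_ne _ hi1l
          rw [hc3 i j hji hil, hc2 i (i+1) (Fin.last (n+1)) hlt hi1lt, hLdef]
          simp only
          rw [hc3 (i+1) j (hji.trans hlt) hi1l]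
          field_simp
  set rho : ℝ := ∏ k, L k with hrho
  have hrhopos : 0 < rho := Finset.prod_pos (fun i _ => hL i)
  have hd : 0 < diagProd A := Finset.prod_pos (fun i _ => hpos i i)
  have hcyc : cycProd A = rho * diagProd A := cyc_eq_rho_mul_diag A L hChain
  have hrholt : rho < 1 := by
    rw [hcyc] at hdc
    nlinarith
  have hone : 0 < 1 - rho := by linarith
  set Bm : Matrix (Fin (n+2)) (Fin (n+2)) ℝ :=
    fun i j => (if j = i then 1 else if j = i + 1 then -(L i) else 0) / ((1 - rho) * A i i)
    with hBm
  have hD : ∀ i : Fin (n+2), (1 - rho) * A i i ≠ 0 := fun i =>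
    ne_of_gt (mul_pos hone (hpos i i))
  have hBmA : Bm * A = 1 := by
    ext i j
    rw [Matrix.mul_apply, Matrix.one_apply]
    have hsub : ∑ k, Bm i k * A k j = ∑ k ∈ ({i, i+1} : Finset (Fin (n+2))), Bm i k * A k j := by
      refine (Finset.sum_subset (Finset.subset_univ _) ?_).symm
      intro k _ hk
      simp only [Finset.mem_insert, Finset.mem_singleton, not_or] at hk
      rw [hBm]
      simp only [if_neg hk.1, if_neg hk.2, zero_div, zero_mul]
    rw [hsub, Finset.sum_pair (Ne.symm (fin_add_one_ne i))]
    have hBii : Bm i i = 1 / ((1 - rho) * A i i) := by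
      rw [hBm]; simp
    have hBisucc : Bm i (i+1) = -(L i) / ((1 - rho) * A i i) := by
      rw [hBm]; simp [if_neg (fin_add_one_ne i)]
    rw [hBii, hBisucc]
    by_cases hij : i = j
    · subst hij
      rw [if_pos rfl]
      have hfc : L i * A (i + 1) i = rho * A i i := by
        rw [← hrho] at *
        exact (full_cycle A L hChain i).trans rfl
      rw [div_mul_eq_mul_div, div_mul_eq_mul_div, ← add_div, div_eq_one_iff_eq (hD i)]
      nlinarith [hfc]
    · rw [if_neg hij]
      have hc := hChain i j (hij)
      rw [div_mul_eq_mul_div, div_mul_eq_mul_div, ← add_div, div_eq_zero_iff]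
      left
      rw [hc]
      ring
  have hdet : A.det ≠ 0 := by
    intro h
    have h1 := congrArg Matrix.det hBmA
    rw [Matrix.det_mul, Matrix.det_one, h, mul_zero] at h1
    exact zero_ne_one h1
  have hinv : A⁻¹ = Bm := Matrix.inv_eq_left_inv hBmA
  refine ⟨hdet, ?_, fun i j => le_of_lt (hpos i j), ?_, ?_, ?_, ?_⟩
  · intro i j hij
    rw [hinv, hBm]
    simp only
    rw [if_neg (Ne.symm hij)]
    by_cases hj1 : j = i + 1
    · rw [if_pos hj1]
      apply le_of_lt
      apply div_neg_of_neg_of_pos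
      · linarith [hL i]
      · exact mul_pos hone (hpos i i)
    · rw [if_neg hj1, zero_div]
  · intro i
    rw [hinv, hBm]
    simp only [eq_self_iff_true, if_true]
    exact one_div_ne_zero (hD i)
  · intro i j hv
    have hj : j = i + 1 := fin_succ_eq_of_val i j hv
    have hji : j ≠ i := by
      intro h; rw [h] at hv; omega
    rw [hinv, hBm]
    simp only [if_neg hji, if_pos hj, hj, eq_self_iff_true, if_true]
    apply ne_of_lt
    apply div_neg_of_neg_of_pos
    · rw [if_neg (fin_add_one_ne i)]; linarith [hL i]
    · exact mul_pos hone (hpos i i)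
  · rw [hinv, hBm]
    have h01 : (0 : Fin (n+2)) ≠ Fin.last (n+1) := by
      intro h
      have := congrArg Fin.val h
      simp [Fin.val_last] at this
    simp only [if_neg h01, ← Fin.last_add_one (n := n+1), eq_self_iff_true, if_true]
    apply ne_of_lt
    apply div_neg_of_neg_of_pos
    · rw [if_neg (fin_add_one_ne (Fin.last (n+1)))]; linarith [hL (Fin.last (n+1))]
    · exact mul_pos hone (hpos _ _)
  · intro i j hij hv hcorner
    have hj1 : j ≠ i + 1 := by
      intro h
      by_cases hil : i = Fin.last (n+1)
      · exact hcorner ⟨hil, by rw [h, hil, Fin.last_add_one]⟩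
      · apply hv
        rw [h, show (1 : Fin (n+2)) = ((1:ℕ) : Fin (n+2)) by norm_num,
          fin_val_add_lt i 1 ?_]
        have h1 := i.is_lt
        have h2 : (i:ℕ) ≠ n + 1 := fun hvv => hil (Fin.val_injective (by simp [hvv]))
        omega
    rw [hinv, hBm]
    simp only [if_neg (Ne.symm hij), if_neg hj1, zero_div]


theorem stmt10 {n : ℕ} (A : Matrix (Fin (n + 2)) (Fin (n + 2)) ℝ) :
    -- `A` is an inverse `M`-matrix (i.e. `A⁻¹` is a nonsingular `Z`-matrix whose
    -- inverse `A` is entrywise nonnegative) such that `A⁻¹` has the bdsw structure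
    (A.det ≠ 0 ∧ (∀ i j, i ≠ j → A⁻¹ i j ≤ 0) ∧ (∀ i j, 0 ≤ A i j) ∧ Bdsw A⁻¹) ↔
    ((∀ i j, 0 < A i j) ∧ InvCyclic A ∧ 0 < diagProd A - cycProd A) := by
  constructor
  · rintro ⟨h1, h2, h3, h4⟩
    exact fwd A h1 h2 h3 h4
  · rintro ⟨h1, h2, h3⟩
    exact bwd A h1 h2 h3
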